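/- Let P be a probability distribution on 𝒳×𝒴, V a measurable score, and ℓ, u nonnegative measurable functions of x with ℓ ≤ u, E[ℓ(X)] ≤ 1 ≤ E[u(X)]. Define the identification set 𝒫(P,ℓ,u) of distributions P̃ whose likelihood ratio dP̃/dP(x,y) lies in [ℓ(x), u(x)] P-a.s. Then for every t ∈ ℝ, inf over P̃ ∈ 𝒫(P,ℓ,u) of P̃(V(X,Y) ≤ t) equals max{ E[1{V(X,Y)≤t}·ℓ(X)], 1 − E[1{V(X,Y)>t}·u(X)] }, and the infimum is attained by some element of 𝒫(P,ℓ,u). -/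

import Mathlib

open MeasureTheory

/-- Auxiliary: set integral of `l + μ(u-l)`. -/
private lemma setInt_comb {𝒳 𝒴 : Type*} [MeasurableSpace 𝒳] [MeasurableSpace 𝒴]
    (P : Measure (𝒳 × 𝒴)) (l u : 𝒳 → ℝ)
    (hlint : Integrable (fun z => l z.1) P) (huint : Integrable (fun z => u z.1) P)
    (A : Set (𝒳 × 𝒴)) (μ : ℝ) :
    ∫ z in A, (l z.1 + μ * (u z.1 - l z.1)) ∂P
      = (∫ z in A, l z.1 ∂P) + μ * ((∫ z in A, u z.1 ∂P) - (∫ z in A, l z.1 ∂P)) := by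
  have hsub : Integrable (fun z : 𝒳 × 𝒴 => u z.1 - l z.1) P := huint.sub hlint
  rw [integral_add hlint.integrableOn ((hsub.integrableOn).const_mul μ),
    integral_const_mul, integral_sub huint.integrableOn hlint.integrableOn]

/-- Auxiliary: existence of an element of the identification set with prescribed
weights `μ` on `A` and `ν` on `Aᶜ`. -/
private lemma aux_exists {𝒳 𝒴 : Type*} [MeasurableSpace 𝒳] [MeasurableSpace 𝒴]
    (P : Measure (𝒳 × 𝒴)) [IsProbabilityMeasure P]
    (l u : 𝒳 → ℝ) (hl : Measurable l) (hu : Measurable u)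
    (hl0 : ∀ x, 0 ≤ l x) (hlu : ∀ x, l x ≤ u x)
    (hlint : Integrable (fun z => l z.1) P) (huint : Integrable (fun z => u z.1) P)
    (A : Set (𝒳 × 𝒴)) (hAm : MeasurableSet A)
    (μ ν : ℝ) (hμ0 : 0 ≤ μ) (hμ1 : μ ≤ 1) (hν0 : 0 ≤ ν) (hν1 : ν ≤ 1) :
    ∃ h : 𝒳 × 𝒴 → ℝ, Measurable h ∧ (∀ z, l z.1 ≤ h z ∧ h z ≤ u z.1) ∧
      (∫ z, h z ∂P = ((∫ z in A, l z.1 ∂P) + μ * ((∫ z in A, u z.1 ∂P) - (∫ z in A, l z.1 ∂P)))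
        + ((∫ z in Aᶜ, l z.1 ∂P) + ν * ((∫ z in Aᶜ, u z.1 ∂P) - (∫ z in Aᶜ, l z.1 ∂P)))) ∧
      (∫ z in A, h z ∂P
        = (∫ z in A, l z.1 ∂P) + μ * ((∫ z in A, u z.1 ∂P) - (∫ z in A, l z.1 ∂P))) := by
  classical
  set h : 𝒳 × 𝒴 → ℝ := fun z =>
    if z ∈ A then l z.1 + μ * (u z.1 - l z.1) else l z.1 + ν * (u z.1 - l z.1) with hh
  have hlm : Measurable fun z : 𝒳 × 𝒴 => l z.1 := hl.comp measurable_fst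
  have hum : Measurable fun z : 𝒳 × 𝒴 => u z.1 := hu.comp measurable_fst
  have hmeas : Measurable h :=
    Measurable.ite hAm (hlm.add ((hum.sub hlm).const_mul μ))
      (hlm.add ((hum.sub hlm).const_mul ν))
  have hbound : ∀ z, l z.1 ≤ h z ∧ h z ≤ u z.1 := by
    intro z
    have h1 : l z.1 ≤ u z.1 := hlu z.1
    by_cases hz : z ∈ A <;> simp only [hh, hz, if_pos, if_neg, if_true, if_false] <;>
      constructor <;> nlinarith
  have hintA : ∫ z in A, h z ∂P = ∫ z in A, (l z.1 + μ * (u z.1 - l z.1)) ∂P := by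
    refine setIntegral_congr_fun hAm fun z hz => ?_
    simp [hh, hz]
  have hintAc : ∫ z in Aᶜ, h z ∂P = ∫ z in Aᶜ, (l z.1 + ν * (u z.1 - l z.1)) ∂P := by
    refine setIntegral_congr_fun hAm.compl fun z hz => ?_
    simp only [Set.mem_compl_iff] at hz
    simp [hh, hz]
  have hint : Integrable h P := by
    refine huint.mono' hmeas.aestronglyMeasurable (ae_of_all _ fun z => ?_)
    have := hbound z
    have := hl0 z.1
    rw [Real.norm_eq_abs, abs_le]
    constructor <;> nlinarith [hlu z.1]
  refine ⟨h, hmeas, hbound, ?_, ?_⟩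
  · rw [← integral_add_compl hAm hint, hintA, hintAc,
      setInt_comb P l u hlint huint A μ, setInt_comb P l u hlint huint Aᶜ ν]
  · rw [hintA, setInt_comb P l u hlint huint A μ]

theorem worst_case_cdf_identification_set
    {𝒳 𝒴 : Type*} [MeasurableSpace 𝒳] [MeasurableSpace 𝒴]
    (P : Measure (𝒳 × 𝒴)) [IsProbabilityMeasure P]
    (V : 𝒳 × 𝒴 → ℝ) (hV : Measurable V)
    (l u : 𝒳 → ℝ) (hl : Measurable l) (hu : Measurable u)
    (hl0 : ∀ x, 0 ≤ l x) (hlu : ∀ x, l x ≤ u x)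
    (hlint : Integrable (fun z => l z.1) P) (huint : Integrable (fun z => u z.1) P)
    (hEl : ∫ z, l z.1 ∂P ≤ 1) (hEu : 1 ≤ ∫ z, u z.1 ∂P)
    (t : ℝ) :
    IsLeast
      { r : ℝ | ∃ h : 𝒳 × 𝒴 → ℝ, Measurable h ∧
          (∀ᵐ z ∂P, l z.1 ≤ h z ∧ h z ≤ u z.1) ∧
          (∫ z, h z ∂P = 1) ∧
          r = ∫ z, (if V z ≤ t then h z else 0) ∂P }
      (max (∫ z, (if V z ≤ t then l z.1 else 0) ∂P)
        (1 - ∫ z, (if t < V z then u z.1 else 0) ∂P)) := by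
  classical
  set A : Set (𝒳 × 𝒴) := {z | V z ≤ t} with hA
  have hAm : MeasurableSet A := measurableSet_le hV measurable_const
  -- convert the `if` integrals to set integrals
  have hconv : ∀ f : 𝒳 × 𝒴 → ℝ,
      (∫ z, (if V z ≤ t then f z else 0) ∂P) = ∫ z in A, f z ∂P := by
    intro f
    rw [← integral_indicator hAm]
    refine integral_congr_ae (ae_of_all _ fun z => ?_)
    simp [Set.indicator_apply, hA, Set.mem_setOf_eq]
  have hconvc : ∀ f : 𝒳 × 𝒴 → ℝ,
      (∫ z, (if t < V z then f z else 0) ∂P) = ∫ z in Aᶜ, f z ∂P := by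
    intro f
    rw [← integral_indicator hAm.compl]
    refine integral_congr_ae (ae_of_all _ fun z => ?_)
    simp [Set.indicator_apply, hA, Set.mem_setOf_eq, not_le]
  set a : ℝ := ∫ z in A, l z.1 ∂P with ha
  set b : ℝ := ∫ z in Aᶜ, u z.1 ∂P with hb
  set c : ℝ := ∫ z in Aᶜ, l z.1 ∂P with hc
  set d : ℝ := ∫ z in A, u z.1 ∂P with hd
  have hac : a + c = ∫ z, l z.1 ∂P := integral_add_compl hAm hlint
  have hdb : d + b = ∫ z, u z.1 ∂P := integral_add_compl hAm huint
  have hcb : c ≤ b := by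
    refine setIntegral_mono_on hlint.integrableOn huint.integrableOn hAm.compl
      fun z _ => hlu z.1
  have had : a ≤ d := by
    refine setIntegral_mono_on hlint.integrableOn huint.integrableOn hAm
      fun z _ => hlu z.1
  rw [hconv, hconvc, ← ha, ← hb]
  constructor
  · -- membership: construct the attaining h
    rcases le_total 1 (a + b) with hcase | hcase
    · -- max = a; take μ = 0, ν = (1-a-c)/(b-c)
      have hmax : max a (1 - b) = a := max_eq_left (by linarith)
      by_cases hbc : b = c
      · obtain ⟨h, hm, hbd, hint, hintA⟩ := aux_exists P l u hl hu hl0 hlu hlint huint A hAm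
          0 0 le_rfl zero_le_one le_rfl zero_le_one
        refine ⟨h, hm, ae_of_all _ hbd, ?_, ?_⟩
        · rw [hint]; rw [hbc] at hcase; linarith
        · rw [hconv, hmax, hintA]; ring
      · have hbc' : 0 < b - c := lt_of_le_of_ne (by linarith) (by intro hx; exact hbc (by linarith))
        set ν : ℝ := (1 - a - c) / (b - c) with hν
        have hν0 : 0 ≤ ν := div_nonneg (by linarith) (le_of_lt hbc')
        have hν1 : ν ≤ 1 := (div_le_one hbc').mpr (by linarith)
        obtain ⟨h, hm, hbd, hint, hintA⟩ := aux_exists P l u hl hu hl0 hlu hlint huint A hAm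
          0 ν le_rfl zero_le_one hν0 hν1
        refine ⟨h, hm, ae_of_all _ hbd, ?_, ?_⟩
        · rw [hint, hν]; field_simp; simp only [← ha, ← hb, ← hc, ← hd]; ring
        · rw [hconv, hmax, hintA]; ring
    · -- max = 1 - b; take μ = (1-b-a)/(d-a), ν = 1
      have hmax : max a (1 - b) = 1 - b := max_eq_right (by linarith)
      by_cases hda : d = a
      · obtain ⟨h, hm, hbd, hint, hintA⟩ := aux_exists P l u hl hu hl0 hlu hlint huint A hAm
          0 1 le_rfl zero_le_one zero_le_one le_rfl
        have h1 : a + b = 1 := by rw [← hda]; linarith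
        refine ⟨h, hm, ae_of_all _ hbd, ?_, ?_⟩
        · rw [hint]; linarith
        · rw [hconv, hmax, hintA]; linarith
      · have hda' : 0 < d - a := lt_of_le_of_ne (by linarith) (by intro hx; exact hda (by linarith))
        set μ : ℝ := (1 - b - a) / (d - a) with hμ
        have hμ0 : 0 ≤ μ := div_nonneg (by linarith) (le_of_lt hda')
        have hμ1 : μ ≤ 1 := (div_le_one hda').mpr (by linarith)
        obtain ⟨h, hm, hbd, hint, hintA⟩ := aux_exists P l u hl hu hl0 hlu hlint huint A hAm
          μ 1 hμ0 hμ1 zero_le_one le_rfl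
        refine ⟨h, hm, ae_of_all _ hbd, ?_, ?_⟩
        · rw [hint, hμ]; field_simp; simp only [← ha, ← hb, ← hc, ← hd]; ring
        · rw [hconv, hmax, hintA, hμ]; field_simp; simp only [← ha, ← hb, ← hc, ← hd]; ring
  · -- lower bound
    rintro r ⟨h, hm, hbd, hint, hr⟩
    rw [hconv] at hr
    have hhint : Integrable h P := by
      refine huint.mono' hm.aestronglyMeasurable ?_
      filter_upwards [hbd] with z hz
      rw [Real.norm_eq_abs, abs_le]
      exact ⟨by nlinarith [hl0 z.1, hz.1, hz.2], hz.2⟩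
    have hsplit : (∫ z in A, h z ∂P) + (∫ z in Aᶜ, h z ∂P) = 1 := by
      rw [integral_add_compl hAm hhint, hint]
    have h1 : a ≤ r := by
      rw [hr, ha]
      exact setIntegral_mono_ae hlint.integrableOn hhint.integrableOn
        (by filter_upwards [hbd] with z hz using hz.1)
    have h2 : (∫ z in Aᶜ, h z ∂P) ≤ b := by
      rw [hb]
      exact setIntegral_mono_ae hhint.integrableOn huint.integrableOn
        (by filter_upwards [hbd] with z hz using hz.2)
    have h3 : 1 - b ≤ r := by rw [hr]; linarith
    exact max_le h1 h3
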